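/- arXiv:1709.07100 — 3 statements merged into one kernel-verified Lean document; each statement's English description precedes it below -/
import Mathlib

section
/- Let A be a real symmetric n×n matrix. If for every h > 0 the matrix with entries exp(−A_{ij}/h) is positive semidefinite, then A is conditionally negative semidefinite, i.e. Σ_{i,j} c_i c_j A_{ij} ≤ 0 for every vector c ∈ ℝⁿ with Σ_i c_i = 0. (This is the matrix form of the Schoenberg-type argument underlying the theorem of Feragen et al. that a geodesic Gaussian kernel can be positive definite for all bandwidths only on a flat space.) -/
open Matrix Filter

lemma aux_tendsto_exp (a : ℝ) :
    Tendsto (fun h : ℝ => h * (Real.exp (-a / h) - 1)) atTop (nhds (-a)) := by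
  rcases eq_or_ne a 0 with rfl | ha
  · simpa using (tendsto_const_nhds : Tendsto (fun _ : ℝ => (0:ℝ)) atTop (nhds 0))
  · have h1 : Tendsto (fun t : ℝ => (Real.exp t - 1) / t) (nhdsWithin 0 {(0:ℝ)}ᶜ) (nhds 1) := by
      have hd := Real.hasDerivAt_exp 0
      rw [hasDerivAt_iff_tendsto_slope] at hd
      rw [Real.exp_zero] at hd
      refine hd.congr fun t => ?_
      rw [slope_def_field]
      simp
    have h2 : Tendsto (fun h : ℝ => -a / h) atTop (nhdsWithin 0 {(0:ℝ)}ᶜ) := by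
      apply tendsto_nhdsWithin_of_tendsto_nhds_of_eventually_within
      · simpa using tendsto_const_nhds.div_atTop tendsto_id
      · filter_upwards [eventually_gt_atTop (0:ℝ)] with h hh
        exact div_ne_zero (neg_ne_zero.2 ha) hh.ne'
    have h3 := (h1.comp h2).const_mul (-a)
    have h4 : (fun h : ℝ => -a * ((Real.exp (-a / h) - 1) / (-a / h)))
        =ᶠ[atTop] fun h : ℝ => h * (Real.exp (-a / h) - 1) := by
      filter_upwards [eventually_gt_atTop (0:ℝ)] with h hh
      field_simp
    have := h3.congr' h4
    simpa using this

/-- Matrix form of the Schoenberg-type argument: if for every bandwidth `h > 0` the matrix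
with entries `exp (−A i j / h)` is positive semidefinite, then the symmetric matrix `A`
is conditionally negative semidefinite. -/
theorem condNegSemidef_of_exp_posSemidef {n : ℕ} (A : Matrix (Fin n) (Fin n) ℝ)
    (hA : A.IsSymm)
    (hexp : ∀ h : ℝ, 0 < h →
      (Matrix.of fun i j => Real.exp (-(A i j) / h)).PosSemidef) :
    ∀ c : Fin n → ℝ, (∑ i, c i) = 0 →
      ∑ i : Fin n, ∑ j : Fin n, c i * c j * A i j ≤ 0 := by
  intro c hc
  set S : ℝ := ∑ i : Fin n, ∑ j : Fin n, c i * c j * A i j with hS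
  set g : ℝ → ℝ := fun h => ∑ i : Fin n, ∑ j : Fin n,
      c i * c j * (h * (Real.exp (-(A i j) / h) - 1)) with hg
  have hlim : Tendsto g atTop (nhds (-S)) := by
    have : Tendsto g atTop (nhds (∑ i : Fin n, ∑ j : Fin n, c i * c j * (-(A i j)))) := by
      apply tendsto_finset_sum
      intro i _
      apply tendsto_finset_sum
      intro j _
      exact (aux_tendsto_exp (A i j)).const_mul (c i * c j)
    convert this using 2
    rw [hS, ← Finset.sum_neg_distrib]
    refine Finset.sum_congr rfl fun i _ => ?_
    rw [← Finset.sum_neg_distrib]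
    exact Finset.sum_congr rfl fun j _ => by ring
  have hpos : ∀ᶠ h in atTop, 0 ≤ g h := by
    filter_upwards [eventually_gt_atTop (0:ℝ)] with h hh
    have hq := (hexp h hh).dotProduct_mulVec_nonneg c
    have hq' : 0 ≤ ∑ i : Fin n, ∑ j : Fin n, c i * c j * Real.exp (-(A i j) / h) := by
      have : (star c) ⬝ᵥ ((Matrix.of fun i j => Real.exp (-(A i j) / h)) *ᵥ c)
          = ∑ i : Fin n, ∑ j : Fin n, c i * c j * Real.exp (-(A i j) / h) := by
        simp [dotProduct, Matrix.mulVec, Finset.mul_sum]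
        apply Finset.sum_congr rfl; intro i _
        apply Finset.sum_congr rfl; intro j _
        ring
      rw [this] at hq
      exact hq
    have hzero : ∑ i : Fin n, ∑ j : Fin n, c i * c j = 0 := by
      have : ∑ i : Fin n, ∑ j : Fin n, c i * c j = (∑ i, c i) * (∑ j, c j) := by
        rw [Finset.sum_mul_sum]
      rw [this, hc, zero_mul]
    have : g h = h * ((∑ i : Fin n, ∑ j : Fin n, c i * c j * Real.exp (-(A i j) / h))
        - ∑ i : Fin n, ∑ j : Fin n, c i * c j) := by
      rw [hg]
      rw [← Finset.sum_sub_distrib, Finset.mul_sum]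
      apply Finset.sum_congr rfl; intro i _
      rw [← Finset.sum_sub_distrib, Finset.mul_sum]
      apply Finset.sum_congr rfl; intro j _
      ring
    rw [this, hzero, sub_zero]
    exact mul_nonneg hh.le hq'
  have : (0:ℝ) ≤ -S := ge_of_tendsto hlim hpos
  linarith
end

section
/- Let A be a real symmetric n×n matrix with zero diagonal that is conditionally negative semidefinite, i.e. Σ_{i,j} c_i c_j A_{ij} ≤ 0 for every vector c ∈ ℝⁿ with Σ_i c_i = 0. Then for every t > 0 the matrix with entries exp(−t A_{ij}) is positive semidefinite. (Schoenberg's theorem, the converse direction used in characterizing when exponential kernels built from a metric are positive definite.) -/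
open Matrix

-- quadratic form characterization over ℝ
lemma psd_of_quadform {n : ℕ} (M : Matrix (Fin n) (Fin n) ℝ)
    (hs : ∀ i j, M i j = M j i)
    (h : ∀ c : Fin n → ℝ, 0 ≤ ∑ i, ∑ j, c i * c j * M i j) : M.PosSemidef := by
  rw [posSemidef_iff_dotProduct_mulVec]
  constructor
  · ext i j; simp [conjTranspose_apply, hs i j]
  · intro x
    have := h x
    simpa [dotProduct, mulVec, Finset.mul_sum, mul_assoc, mul_comm, mul_left_comm] using this

lemma quadform_nonneg_of_psd {n : ℕ} {M : Matrix (Fin n) (Fin n) ℝ}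
    (h : M.PosSemidef) (c : Fin n → ℝ) : 0 ≤ ∑ i, ∑ j, c i * c j * M i j := by
  have := h.dotProduct_mulVec_nonneg c
  simpa [dotProduct, mulVec, Finset.mul_sum, mul_assoc, mul_comm, mul_left_comm] using this

lemma psd_symm_apply {n : ℕ} {M : Matrix (Fin n) (Fin n) ℝ} (h : M.PosSemidef) (i j : Fin n) :
    M i j = M j i := by
  have := h.1
  have := congrFun (congrFun this j) i
  simpa [conjTranspose_apply] using this

-- Schur product theorem
lemma schur_psd {n : ℕ} {M N : Matrix (Fin n) (Fin n) ℝ}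
    (hM : M.PosSemidef) (hN : N.PosSemidef) :
    (Matrix.of fun i j => M i j * N i j).PosSemidef := by
  obtain ⟨B, hB⟩ : ∃ B : Matrix (Fin n) (Fin n) ℝ, N = Bᴴ * B := by
    open scoped MatrixOrder in
    obtain ⟨B, hB⟩ := CStarAlgebra.nonneg_iff_eq_star_mul_self.mp hN.nonneg
    exact ⟨B, by rw [hB, star_eq_conjTranspose]⟩
  have hNapp : ∀ i j, N i j = ∑ k, B k i * B k j := by
    intro i j
    rw [hB]
    simp [Matrix.mul_apply, conjTranspose_apply]
  apply psd_of_quadform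
  · intro i j
    simp only [of_apply, psd_symm_apply hM i j, psd_symm_apply hN i j]
  · intro c
    have key : ∑ i, ∑ j, c i * c j * (M i j * N i j)
        = ∑ k, ∑ i, ∑ j, (c i * B k i) * (c j * B k j) * M i j :=
      calc ∑ i, ∑ j, c i * c j * (M i j * N i j)
          = ∑ i, ∑ j, ∑ k, (c i * B k i) * (c j * B k j) * M i j := by
            refine Finset.sum_congr rfl fun i _ => Finset.sum_congr rfl fun j _ => ?_
            rw [hNapp]
            simp only [Finset.mul_sum]
            exact Finset.sum_congr rfl fun k _ => by ring
        _ = ∑ i, ∑ k, ∑ j, (c i * B k i) * (c j * B k j) * M i j :=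
            Finset.sum_congr rfl fun i _ => Finset.sum_comm
        _ = ∑ k, ∑ i, ∑ j, (c i * B k i) * (c j * B k j) * M i j := Finset.sum_comm
    simp only [of_apply, key]
    exact Finset.sum_nonneg fun k _ =>
      quadform_nonneg_of_psd hM (fun i => c i * B k i)

lemma ones_psd {n : ℕ} : (Matrix.of fun _ _ : Fin n => (1:ℝ)).PosSemidef := by
  apply psd_of_quadform
  · intro i j; rfl
  · intro c
    have : ∑ i, ∑ j, c i * c j * (1:ℝ) = (∑ i, c i) * (∑ j, c j) := by
      rw [Finset.sum_mul_sum]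
      exact Finset.sum_congr rfl fun i _ => Finset.sum_congr rfl fun j _ => by ring
    simp only [of_apply, this]
    exact mul_self_nonneg _

lemma hadamard_pow_psd {n : ℕ} {M : Matrix (Fin n) (Fin n) ℝ} (hM : M.PosSemidef) (k : ℕ) :
    (Matrix.of fun i j => (M i j) ^ k).PosSemidef := by
  induction k with
  | zero => simpa using ones_psd
  | succ k ih =>
    have := schur_psd hM ih
    convert this using 2
    ext i j
    simp [pow_succ, mul_comm]

lemma exp_entrywise_psd {n : ℕ} {M : Matrix (Fin n) (Fin n) ℝ} (hM : M.PosSemidef) :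
    (Matrix.of fun i j => Real.exp (M i j)).PosSemidef := by
  apply psd_of_quadform
  · intro i j; simp [psd_symm_apply hM i j]
  · intro c
    simp only [of_apply]
    have hexp : ∀ i j, c i * c j * Real.exp (M i j)
        = ∑' k : ℕ, c i * c j * ((M i j) ^ k / (k.factorial : ℝ)) := by
      intro i j
      rw [Real.exp_eq_exp_ℝ, NormedSpace.exp_eq_tsum_div, ← tsum_mul_left]
    calc (0:ℝ) ≤ ∑' k : ℕ, ∑ i, ∑ j, c i * c j * ((M i j) ^ k / (k.factorial : ℝ)) := by
          apply tsum_nonneg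
          intro k
          have : ∑ i, ∑ j, c i * c j * ((M i j) ^ k / (k.factorial : ℝ))
              = (1 / (k.factorial : ℝ)) * ∑ i, ∑ j, c i * c j * (M i j) ^ k := by
            rw [Finset.mul_sum]
            refine Finset.sum_congr rfl fun i _ => ?_
            rw [Finset.mul_sum]
            exact Finset.sum_congr rfl fun j _ => by ring
          rw [this]
          have h1 : (0:ℝ) ≤ 1 / (k.factorial : ℝ) := by positivity
          have h2 := quadform_nonneg_of_psd (hadamard_pow_psd hM k) c
          simp only [of_apply] at h2
          exact mul_nonneg h1 h2
      _ = ∑ i, ∑ j, ∑' k : ℕ, c i * c j * ((M i j) ^ k / (k.factorial : ℝ)) := by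
          rw [Summable.tsum_finsetSum (fun i _ => summable_sum (fun j _ =>
            (Real.summable_pow_div_factorial (M i j)).mul_left (c i * c j)))]
          exact Finset.sum_congr rfl fun i _ => Summable.tsum_finsetSum (fun j _ =>
            ((Real.summable_pow_div_factorial (M i j)).mul_left (c i * c j)))
      _ = ∑ i, ∑ j, c i * c j * Real.exp (M i j) := by
          exact Finset.sum_congr rfl fun i _ => Finset.sum_congr rfl fun j _ => (hexp i j).symm

lemma diag_scale_psd {n : ℕ} {M : Matrix (Fin n) (Fin n) ℝ} (hM : M.PosSemidef) (d : Fin n → ℝ) :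
    (Matrix.of fun i j => d i * M i j * d j).PosSemidef := by
  apply psd_of_quadform
  · intro i j; simp only [of_apply, psd_symm_apply hM i j]; ring
  · intro c
    have key : ∑ i, ∑ j, c i * c j * ((fun i j => d i * M i j * d j) i j)
        = ∑ i, ∑ j, (c i * d i) * (c j * d j) * M i j :=
      Finset.sum_congr rfl fun i _ => Finset.sum_congr rfl fun j _ => by ring
    simp only [of_apply]
    calc (0:ℝ) ≤ ∑ i, ∑ j, (c i * d i) * (c j * d j) * M i j :=
          quadform_nonneg_of_psd hM _
      _ = ∑ i, ∑ j, c i * c j * (d i * M i j * d j) :=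
          Finset.sum_congr rfl fun i _ => Finset.sum_congr rfl fun j _ => by ring

lemma shift_identity {n : ℕ} (A : Matrix (Fin n) (Fin n) ℝ) (t : ℝ) (p : Fin n) (c : Fin n → ℝ)
    (hdiag : ∀ i, A i i = 0) :
    ∑ i, ∑ j, c i * c j * (t * (A i p + A p j - A i j))
      = -t * ∑ i, ∑ j, (c i - (∑ k, c k) * (if i = p then 1 else 0))
          * (c j - (∑ k, c k) * (if j = p then 1 else 0)) * A i j := by
  set s : ℝ := ∑ k, c k with hs
  have collapse : ∀ g : Fin n → ℝ, ∑ i, (if i = p then (1:ℝ) else 0) * g i = g p := by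
    intro g
    simp [ite_mul]
  have hLHS : ∑ i, ∑ j, c i * c j * (t * (A i p + A p j - A i j))
      = t * ((∑ i, c i * A i p) * s + s * (∑ j, c j * A p j)
          - ∑ i, ∑ j, c i * c j * A i j) := by
    have step : ∀ i, ∑ j, c i * c j * (t * (A i p + A p j - A i j))
        = t * (c i * A i p * s + c i * (∑ j, c j * A p j) - ∑ j, c i * c j * A i j) := by
      intro i
      rw [hs]
      simp only [Finset.mul_sum, ← Finset.sum_add_distrib, ← Finset.sum_sub_distrib]
      exact Finset.sum_congr rfl fun j _ => by ring
    simp only [step, ← Finset.mul_sum]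
    congr 1
    rw [Finset.sum_sub_distrib, Finset.sum_add_distrib, ← Finset.sum_mul, ← Finset.sum_mul]
  have hRHS : ∑ i, ∑ j, (c i - s * (if i = p then 1 else 0))
      * (c j - s * (if j = p then 1 else 0)) * A i j
      = (∑ i, ∑ j, c i * c j * A i j) - s * (∑ j, c j * A p j)
        - s * (∑ i, c i * A i p) + s * s * A p p := by
    have step : ∀ i, ∑ j, (c i - s * (if i = p then 1 else 0))
        * (c j - s * (if j = p then 1 else 0)) * A i j
        = (∑ j, c i * c j * A i j) - (if i = p then (1:ℝ) else 0) * (s * ∑ j, c j * A i j)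
          - s * (c i * A i p) + (if i = p then (1:ℝ) else 0) * (s * s * A i p) := by
      intro i
      have e1 : ∑ j, (if j = p then (1:ℝ) else 0) * (s * (c i * A i j)) = s * (c i * A i p) :=
        collapse _
      have e4 : ∑ j, (if i = p then (1:ℝ) else 0) * (s * (c j * A i j))
          = (if i = p then (1:ℝ) else 0) * (s * ∑ j, c j * A i j) := by
        simp only [Finset.mul_sum]
      calc ∑ j, (c i - s * (if i = p then 1 else 0))
            * (c j - s * (if j = p then 1 else 0)) * A i j
          = ∑ j, (c i * c j * A i j
              - (if i = p then (1:ℝ) else 0) * (s * (c j * A i j))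
              - (if j = p then (1:ℝ) else 0) * (s * (c i * A i j))
              + (if j = p then (1:ℝ) else 0)
                * ((if i = p then (1:ℝ) else 0) * (s * (s * A i j)))) :=
            Finset.sum_congr rfl fun j _ => by ring
        _ = _ := by
            have e3 : ∑ j, (if j = p then (1:ℝ) else 0)
                * ((if i = p then (1:ℝ) else 0) * (s * (s * A i j)))
                = (if i = p then (1:ℝ) else 0) * (s * (s * A i p)) := collapse _
            rw [Finset.sum_add_distrib, Finset.sum_sub_distrib, Finset.sum_sub_distrib,
              e1, e3, e4]
            ring
    simp only [step]
    rw [Finset.sum_add_distrib, Finset.sum_sub_distrib, Finset.sum_sub_distrib,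
      collapse (fun i => s * ∑ j, c j * A i j), collapse (fun i => s * s * A i p),
      ← Finset.mul_sum]
  rw [hLHS, hRHS, hdiag p]
  ring

/-- Schoenberg's theorem (matrix form, converse direction): if `A` is a real symmetric
matrix with zero diagonal that is conditionally negative semidefinite, then for every
`t > 0` the matrix with entries `exp (−t * A i j)` is positive semidefinite. -/
theorem exp_posSemidef_of_condNegSemidef {n : ℕ} (A : Matrix (Fin n) (Fin n) ℝ)
    (hA : A.IsSymm) (hdiag : ∀ i, A i i = 0)
    (hcnsd : ∀ c : Fin n → ℝ, (∑ i, c i) = 0 →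
      ∑ i : Fin n, ∑ j : Fin n, c i * c j * A i j ≤ 0) :
    ∀ t : ℝ, 0 < t →
      (Matrix.of fun i j => Real.exp (-t * A i j)).PosSemidef := by
  intro t ht
  have hsymm : ∀ i j, A i j = A j i := fun i j => (congrFun (congrFun hA j) i : Aᵀ j i = A j i) ▸ rfl
  rcases Nat.eq_zero_or_pos n with hn | hn
  · subst hn
    apply psd_of_quadform
    · intro i; exact i.elim0
    · intro c; simp
  · set p : Fin n := ⟨0, hn⟩
    -- B i j = t * (A i p + A p j - A i j) is PSD
    have hB : (Matrix.of fun i j => t * (A i p + A p j - A i j)).PosSemidef := by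
      apply psd_of_quadform
      · intro i j
        simp only [of_apply]
        rw [hsymm i p, hsymm p j, hsymm i j]; ring
      · intro c
        have hdsum : ∑ i, (c i - (∑ k, c k) * (if i = p then 1 else 0)) = 0 := by
          rw [Finset.sum_sub_distrib, ← Finset.mul_sum]
          simp [Finset.sum_ite_eq']
        have hid := shift_identity A t p c hdiag
        simp only [of_apply]
        rw [hid]
        have := hcnsd _ hdsum
        nlinarith
    have final := diag_scale_psd (exp_entrywise_psd hB) (fun k => Real.exp (-t * A k p))
    have heq : (Matrix.of fun i j => Real.exp (-t * A i j))
        = Matrix.of fun i j => (fun k => Real.exp (-t * A k p)) i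
            * (Matrix.of fun i j => Real.exp
                ((Matrix.of fun i j => t * (A i p + A p j - A i j)) i j)) i j
            * (fun k => Real.exp (-t * A k p)) j := by
      ext i j
      simp only [of_apply, ← Real.exp_add]
      congr 1
      rw [hsymm p j]
      ring
    rw [heq]
    exact final
end

section
/- Let H be a real inner product space and h > 0. Then for all points x₁, …, x_n ∈ H and all real coefficients c₁, …, c_n, Σ_{i,j} c_i c_j exp(−‖x_i − x_j‖/h) ≥ 0; that is, the Laplacian kernel k(x, y) = exp(−‖x−y‖/h) is positive semidefinite on an inner product space. -/
open Finset Real Nat MeasureTheory Set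
open scoped ENNReal NNReal

/-- quadratic-form positivity of a kernel given by a function -/
def PSDk {n : ℕ} (M : Fin n → Fin n → ℝ) : Prop :=
  ∀ c : Fin n → ℝ, 0 ≤ ∑ i, ∑ j, c i * c j * M i j

lemma psdk_gram {H : Type*} [NormedAddCommGroup H] [InnerProductSpace ℝ H]
    {n : ℕ} (x : Fin n → H) : PSDk (fun i j => inner ℝ (x i) (x j)) := by
  intro c
  have : ∑ i, ∑ j, c i * c j * (inner ℝ (x i) (x j) : ℝ)
      = inner ℝ (∑ i, c i • x i) (∑ j, c j • x j) := by
    simp only [sum_inner, inner_sum, real_inner_smul_left, real_inner_smul_right]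
    exact Finset.sum_congr rfl fun i _ => Finset.sum_congr rfl fun j _ => by
      rw [real_inner_comm (x j) (x i)]; ring
  rw [this]
  exact real_inner_self_nonneg

/-- Schur product: if `M` is a symmetric PSD kernel and `N` has nonneg quadratic form,
then the entrywise product does too. -/
lemma psdk_schur {n : ℕ} {M N : Fin n → Fin n → ℝ}
    (hMs : ∀ i j, M i j = M j i) (hM : PSDk M) (hN : PSDk N) :
    PSDk (fun i j => M i j * N i j) := by
  have hpsd : (Matrix.of M).PosSemidef := by
    refine Matrix.PosSemidef.of_dotProduct_mulVec_nonneg ?_ ?_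
    · ext i j
      simp [Matrix.conjTranspose, hMs i j]
    · intro c
      have h1 : ∑ i, ∑ j, c i * c j * M i j = ∑ i, c i * ∑ j, M i j * c j := by
        simp only [Finset.mul_sum]
        exact Finset.sum_congr rfl fun i _ => Finset.sum_congr rfl fun j _ => by ring
      simp only [dotProduct, Matrix.mulVec, dotProduct, Pi.star_apply,
        star_trivial, RCLike.re_to_real, Matrix.of_apply]
      rw [← h1]
      exact hM c
  obtain ⟨m, B, hB⟩ := Matrix.posSemidef_iff_eq_sum_vecMulVec.mp hpsd
  have hMB : ∀ i j, M i j = ∑ a, B a i * B a j := by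
    intro i j
    have := congrFun (congrFun hB i) j
    simpa [Matrix.sum_apply, Matrix.vecMulVec_apply] using this
  intro c
  calc (0:ℝ) ≤ ∑ a, ∑ i, ∑ j, (c i * B a i) * (c j * B a j) * N i j :=
        Finset.sum_nonneg fun a _ => hN _
    _ = ∑ i, ∑ a, ∑ j, (c i * B a i) * (c j * B a j) * N i j := Finset.sum_comm
    _ = ∑ i, ∑ j, ∑ a, (c i * B a i) * (c j * B a j) * N i j :=
        Finset.sum_congr rfl fun i _ => Finset.sum_comm
    _ = ∑ i, ∑ j, c i * c j * (M i j * N i j) := by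
        refine Finset.sum_congr rfl fun i _ => Finset.sum_congr rfl fun j _ => ?_
        rw [hMB i j, Finset.sum_mul, Finset.mul_sum]
        exact Finset.sum_congr rfl fun a _ => by ring

lemma psdk_pow {n : ℕ} {M : Fin n → Fin n → ℝ}
    (hMs : ∀ i j, M i j = M j i) (hM : PSDk M) (k : ℕ) :
    PSDk (fun i j => M i j ^ k) := by
  induction k with
  | zero =>
    intro c
    simpa [← Finset.sum_mul, ← Finset.mul_sum] using mul_self_nonneg (∑ i, c i)
  | succ k ih =>
    have := psdk_schur hMs hM ih
    intro c
    simpa [pow_succ, mul_comm] using this c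

lemma psdk_exp {n : ℕ} {M : Fin n → Fin n → ℝ}
    (hMs : ∀ i j, M i j = M j i) (hM : PSDk M) :
    PSDk (fun i j => Real.exp (M i j)) := by
  intro c
  have hexp : ∀ i j, c i * c j * Real.exp (M i j)
      = ∑' k : ℕ, c i * c j * (M i j ^ k / k !) := by
    intro i j
    rw [tsum_mul_left, Real.exp_eq_exp_ℝ, NormedSpace.exp_eq_tsum_div]
  have hsummable : ∀ i j : Fin n, Summable (fun k : ℕ => c i * c j * (M i j ^ k / k !)) :=
    fun i j => Summable.mul_left _ (Real.summable_pow_div_factorial (M i j))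
  calc (0:ℝ) ≤ ∑' k : ℕ, ∑ i, ∑ j, c i * c j * (M i j ^ k / k !) := by
        refine tsum_nonneg fun k => ?_
        have hk := psdk_pow hMs hM k c
        calc (0:ℝ) ≤ (∑ i, ∑ j, c i * c j * M i j ^ k) / k ! := by positivity
          _ = ∑ i, ∑ j, c i * c j * (M i j ^ k / k !) := by
              rw [Finset.sum_div]
              refine Finset.sum_congr rfl fun i _ => ?_
              rw [Finset.sum_div]
              exact Finset.sum_congr rfl fun j _ => by ring
    _ = ∑ i, ∑ j, ∑' k : ℕ, c i * c j * (M i j ^ k / k !) := by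
        rw [Summable.tsum_finsetSum fun i _ => summable_sum fun j _ => hsummable i j]
        exact Finset.sum_congr rfl fun i _ =>
          Summable.tsum_finsetSum fun j _ => hsummable i j
    _ = ∑ i, ∑ j, c i * c j * Real.exp (M i j) := by
        exact Finset.sum_congr rfl fun i _ => Finset.sum_congr rfl fun j _ => (hexp i j).symm

/-- the Gaussian kernel has nonnegative quadratic form -/
lemma psdk_gauss {H : Type*} [NormedAddCommGroup H] [InnerProductSpace ℝ H]
    {n : ℕ} (x : Fin n → H) {t : ℝ} (ht : 0 ≤ t) :
    PSDk (fun i j => Real.exp (-(t * ‖x i - x j‖ ^ 2))) := by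
  intro c
  set d : Fin n → ℝ := fun i => c i * Real.exp (-(t * ‖x i‖ ^ 2)) with hd
  have key : ∀ i j, c i * c j * Real.exp (-(t * ‖x i - x j‖ ^ 2))
      = d i * d j * Real.exp (2 * t * inner ℝ (x i) (x j)) := by
    intro i j
    have harg : -(t * ‖x i - x j‖ ^ 2)
        = -(t * ‖x i‖ ^ 2) + (-(t * ‖x j‖ ^ 2) + 2 * t * inner ℝ (x i) (x j)) := by
      rw [norm_sub_sq_real]; ring
    rw [harg, Real.exp_add, Real.exp_add, hd]
    simp only
    ring
  have hM : PSDk (fun i j => (2 * t * inner ℝ (x i) (x j) : ℝ)) := by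
    intro e
    have hg := psdk_gram x e
    calc (0:ℝ) ≤ 2 * t * ∑ i, ∑ j, e i * e j * inner ℝ (x i) (x j) := by
          exact mul_nonneg (by linarith) hg
      _ = ∑ i, ∑ j, e i * e j * (2 * t * inner ℝ (x i) (x j)) := by
          rw [Finset.mul_sum]
          refine Finset.sum_congr rfl fun i _ => ?_
          rw [Finset.mul_sum]
          exact Finset.sum_congr rfl fun j _ => by ring
  have hMs : ∀ i j, (2 * t * inner ℝ (x i) (x j) : ℝ) = 2 * t * inner ℝ (x j) (x i) :=
    fun i j => by rw [real_inner_comm]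
  calc (0:ℝ) ≤ ∑ i, ∑ j, d i * d j * Real.exp (2 * t * inner ℝ (x i) (x j)) :=
        psdk_exp hMs hM d
    _ = ∑ i, ∑ j, c i * c j * Real.exp (-(t * ‖x i - x j‖ ^ 2)) :=
        Finset.sum_congr rfl fun i _ => Finset.sum_congr rfl fun j _ => (key i j).symm

lemma contOnAux {l : ℝ} : ContinuousOn
    (fun t : ℝ => (1 - Real.exp (-(l * t))) * t ^ (-(3/2) : ℝ)) (Ioi 0) := by
  refine ContinuousOn.mul ?_ ?_
  · exact (continuous_const.sub ((continuous_const.mul continuous_id).neg.rexp)).continuousOn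
  · intro t ht
    exact (Real.continuousAt_rpow_const t _ (Or.inl (ne_of_gt ht))).continuousWithinAt

lemma integrable_aux {l : ℝ} (hl : 0 ≤ l) :
    IntegrableOn (fun t : ℝ => (1 - Real.exp (-(l * t))) * t ^ (-(3/2) : ℝ)) (Ioi 0) := by
  have key : Ioi (0:ℝ) = Ioc (0:ℝ) 1 ∪ Ioi 1 := by
    rw [Ioc_union_Ioi_eq_Ioi]; norm_num
  rw [key]
  refine IntegrableOn.union ?_ ?_
  · have hbig : IntegrableOn (fun t : ℝ => l * t ^ (-(1/2) : ℝ)) (Ioc 0 1) := by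
      have h2 := (intervalIntegral.intervalIntegrable_rpow' (r := (-(1/2):ℝ)) (by norm_num)
        (a := 0) (b := 1))
      rw [intervalIntegrable_iff_integrableOn_Ioc_of_le (by norm_num)] at h2
      exact h2.const_mul l
    have hmeas : AEStronglyMeasurable
        (fun t : ℝ => (1 - Real.exp (-(l * t))) * t ^ (-(3/2) : ℝ))
        (volume.restrict (Ioc 0 1)) :=
      (contOnAux.mono (by intro t ht; exact ht.1)).aestronglyMeasurable measurableSet_Ioc
    refine Integrable.mono' hbig hmeas ?_
    refine (ae_restrict_iff' measurableSet_Ioc).mpr (Filter.Eventually.of_forall ?_)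
    rintro s ⟨hs0, hs1⟩
    have hsp : (0:ℝ) < s := hs0
    have h1 : 0 ≤ 1 - Real.exp (-(l * s)) := by
      have := Real.exp_le_one_iff.mpr (by nlinarith : -(l*s) ≤ 0)
      linarith
    have h2 : 1 - Real.exp (-(l * s)) ≤ l * s := by
      have := Real.add_one_le_exp (-(l * s))
      linarith
    have h3 : (0:ℝ) < s ^ (-(3/2) : ℝ) := Real.rpow_pos_of_pos hsp _
    rw [Real.norm_eq_abs, abs_of_nonneg (by positivity)]
    calc (1 - Real.exp (-(l * s))) * s ^ (-(3/2) : ℝ)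
        ≤ (l * s) * s ^ (-(3/2) : ℝ) := by nlinarith
      _ = l * s ^ (-(1/2) : ℝ) := by
          rw [mul_assoc]
          congr 1
          rw [show s * s ^ (-(3/2):ℝ) = s ^ ((1:ℝ) + (-(3/2))) by
            rw [Real.rpow_add hsp, Real.rpow_one]]
          norm_num
  · have hbig : IntegrableOn (fun t : ℝ => t ^ (-(3/2) : ℝ)) (Ioi 1) :=
      integrableOn_Ioi_rpow_of_lt (by norm_num) (by norm_num)
    have hmeas : AEStronglyMeasurable
        (fun t : ℝ => (1 - Real.exp (-(l * t))) * t ^ (-(3/2) : ℝ))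
        (volume.restrict (Ioi 1)) :=
      (contOnAux.mono (by intro t ht; exact lt_trans one_pos (mem_Ioi.mp ht))).aestronglyMeasurable
        measurableSet_Ioi
    refine Integrable.mono' hbig hmeas ?_
    refine (ae_restrict_iff' measurableSet_Ioi).mpr (Filter.Eventually.of_forall ?_)
    intro s hs
    have hsp : (0:ℝ) < s := lt_trans one_pos hs
    have h1 : 0 ≤ 1 - Real.exp (-(l * s)) := by
      have := Real.exp_le_one_iff.mpr (by nlinarith : -(l*s) ≤ 0)
      linarith
    have h2 : 1 - Real.exp (-(l * s)) ≤ 1 := by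
      have := Real.exp_pos (-(l * s)); linarith
    have h3 : (0:ℝ) < s ^ (-(3/2) : ℝ) := Real.rpow_pos_of_pos hsp _
    rw [Real.norm_eq_abs, abs_of_nonneg (by positivity)]
    nlinarith

noncomputable def Cst : ℝ := ∫ t in Ioi (0:ℝ), (1 - Real.exp (-(1 * t))) * t ^ (-(3/2) : ℝ)

lemma Cst_pos : 0 < Cst := by
  rw [Cst]
  rw [setIntegral_pos_iff_support_of_nonneg_ae]
  · have hsub : Ioi (0:ℝ) ⊆ Function.support
        (fun t : ℝ => (1 - Real.exp (-(1 * t))) * t ^ (-(3/2) : ℝ)) ∩ Ioi 0 := by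
      intro t ht
      refine ⟨?_, ht⟩
      have htp : (0:ℝ) < t := ht
      have h1 : Real.exp (-(1 * t)) < 1 := by
        rw [Real.exp_lt_one_iff]; linarith
      have h3 : (0:ℝ) < t ^ (-(3/2) : ℝ) := Real.rpow_pos_of_pos htp _
      exact ne_of_gt (by nlinarith)
    calc (0:ℝ≥0∞) < volume (Ioi (0:ℝ)) := by simp
      _ ≤ _ := measure_mono hsub
  · refine (ae_restrict_iff' measurableSet_Ioi).mpr (Filter.Eventually.of_forall ?_)
    intro t ht
    have htp : (0:ℝ) < t := ht
    have h1 : Real.exp (-(1 * t)) ≤ 1 := by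
      rw [Real.exp_le_one_iff]; linarith
    have h3 : (0:ℝ) < t ^ (-(3/2) : ℝ) := Real.rpow_pos_of_pos htp _
    simp only [Pi.zero_apply]
    nlinarith
  · exact integrable_aux zero_le_one

lemma scale_identity {l : ℝ} (hl : 0 < l) :
    ∫ t in Ioi (0:ℝ), (1 - Real.exp (-(l * t))) * t ^ (-(3/2) : ℝ)
      = Real.sqrt l * Cst := by
  have congr1 : ∫ t in Ioi (0:ℝ), (1 - Real.exp (-(l * t))) * t ^ (-(3/2) : ℝ)
      = ∫ t in Ioi (0:ℝ),
          l ^ ((3:ℝ)/2) * ((1 - Real.exp (-(1 * (l * t)))) * (l * t) ^ (-(3/2) : ℝ)) := by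
    refine setIntegral_congr_fun measurableSet_Ioi fun t ht => ?_
    have htp : (0:ℝ) < t := ht
    rw [one_mul, Real.mul_rpow (le_of_lt hl) (le_of_lt htp)]
    rw [show l ^ ((3:ℝ)/2) * ((1 - Real.exp (-(l * t))) * (l ^ (-(3/2):ℝ) * t ^ (-(3/2):ℝ)))
        = (l ^ ((3:ℝ)/2) * l ^ (-(3/2):ℝ)) * ((1 - Real.exp (-(l * t))) * t ^ (-(3/2):ℝ)) by ring]
    rw [← Real.rpow_add hl]
    norm_num
  rw [congr1, integral_const_mul]
  rw [integral_comp_mul_left_Ioi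
    (fun u => (1 - Real.exp (-(1 * u))) * u ^ (-(3/2) : ℝ)) 0 hl]
  rw [mul_zero]
  rw [smul_eq_mul, ← Cst, ← mul_assoc]
  congr 1
  rw [show l⁻¹ = l ^ (-(1:ℝ)) by rw [Real.rpow_neg_one], ← Real.rpow_add hl]
  rw [show (3:ℝ)/2 + -1 = (1:ℝ)/2 by norm_num]
  rw [Real.sqrt_eq_rpow]

/-- negative definiteness of the norm on an inner product space -/
lemma negdef {H : Type*} [NormedAddCommGroup H] [InnerProductSpace ℝ H]
    {n : ℕ} (x : Fin n → H) (c : Fin n → ℝ) (hc : ∑ i, c i = 0) :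
    ∑ i, ∑ j, c i * c j * ‖x i - x j‖ ≤ 0 := by
  have hCnorm : ∀ i j : Fin n, Cst * ‖x i - x j‖
      = ∫ t in Ioi (0:ℝ), (1 - Real.exp (-(‖x i - x j‖ ^ 2 * t))) * t ^ (-(3/2) : ℝ) := by
    intro i j
    rcases eq_or_lt_of_le (norm_nonneg (x i - x j)) with h0 | hpos
    · rw [← h0]
      simp
    · have hl : (0:ℝ) < ‖x i - x j‖ ^ 2 := by positivity
      rw [scale_identity hl, Real.sqrt_sq (norm_nonneg _)]
      ring
  have hint : ∀ i j : Fin n, IntegrableOn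
      (fun t : ℝ => (1 - Real.exp (-(‖x i - x j‖ ^ 2 * t))) * t ^ (-(3/2) : ℝ)) (Ioi 0) :=
    fun i j => integrable_aux (by positivity)
  have key : Cst * (∑ i, ∑ j, c i * c j * ‖x i - x j‖)
      = ∫ t in Ioi (0:ℝ), ∑ i, ∑ j, c i * c j *
          ((1 - Real.exp (-(‖x i - x j‖ ^ 2 * t))) * t ^ (-(3/2) : ℝ)) := by
    calc Cst * (∑ i, ∑ j, c i * c j * ‖x i - x j‖)
        = ∑ i, ∑ j, c i * c j * (Cst * ‖x i - x j‖) := by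
          rw [Finset.mul_sum]
          refine Finset.sum_congr rfl fun i _ => ?_
          rw [Finset.mul_sum]
          exact Finset.sum_congr rfl fun j _ => by ring
      _ = ∑ i, ∑ j, ∫ t in Ioi (0:ℝ), c i * c j *
            ((1 - Real.exp (-(‖x i - x j‖ ^ 2 * t))) * t ^ (-(3/2) : ℝ)) := by
          refine Finset.sum_congr rfl fun i _ => Finset.sum_congr rfl fun j _ => ?_
          rw [hCnorm i j, ← integral_const_mul]
      _ = ∫ t in Ioi (0:ℝ), ∑ i, ∑ j, c i * c j *
            ((1 - Real.exp (-(‖x i - x j‖ ^ 2 * t))) * t ^ (-(3/2) : ℝ)) := by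
          rw [integral_finset_sum univ fun i _ =>
            integrable_finset_sum univ fun j _ => (hint i j).const_mul (c i * c j)]
          exact Finset.sum_congr rfl fun i _ =>
            (integral_finset_sum univ fun j _ => (hint i j).const_mul (c i * c j)).symm
  have hF : ∀ t ∈ Ioi (0:ℝ), (∑ i, ∑ j, c i * c j *
      ((1 - Real.exp (-(‖x i - x j‖ ^ 2 * t))) * t ^ (-(3/2) : ℝ))) ≤ 0 := by
    intro t ht
    have htp : (0:ℝ) < t := ht
    have hG := psdk_gauss x (le_of_lt htp) c
    have hw : (0:ℝ) ≤ t ^ (-(3/2) : ℝ) := le_of_lt (Real.rpow_pos_of_pos htp _)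
    have expand : ∑ i, ∑ j, c i * c j *
        ((1 - Real.exp (-(‖x i - x j‖ ^ 2 * t))) * t ^ (-(3/2) : ℝ))
        = t ^ (-(3/2) : ℝ) * ((∑ i, c i) * (∑ j, c j))
          - t ^ (-(3/2) : ℝ) * ∑ i, ∑ j, c i * c j * Real.exp (-(t * ‖x i - x j‖ ^ 2)) := by
      rw [Finset.sum_mul_sum, Finset.mul_sum, Finset.mul_sum, ← Finset.sum_sub_distrib]
      refine Finset.sum_congr rfl fun i _ => ?_
      rw [Finset.mul_sum, Finset.mul_sum, ← Finset.sum_sub_distrib]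
      refine Finset.sum_congr rfl fun j _ => ?_
      rw [mul_comm (‖x i - x j‖ ^ 2) t]
      ring
    rw [expand, hc]
    have := mul_nonneg hw hG
    linarith
  have hle : Cst * (∑ i, ∑ j, c i * c j * ‖x i - x j‖) ≤ 0 := by
    rw [key]
    exact setIntegral_nonpos measurableSet_Ioi hF
  nlinarith [Cst_pos]

/-- the Schoenberg kernel is PSD -/
lemma psdk_norm_kernel {H : Type*} [NormedAddCommGroup H] [InnerProductSpace ℝ H]
    {n : ℕ} (x : Fin n → H) :
    PSDk (fun i j => ‖x i‖ + ‖x j‖ - ‖x i - x j‖) := by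
  intro c
  set T : ℝ := ∑ i, c i with hT
  set c' : Fin (n+1) → ℝ := Fin.cons (-T) c with hc'
  set x' : Fin (n+1) → H := Fin.cons 0 x with hx'
  have hsum : ∑ i, c' i = 0 := by
    rw [hc', Fin.sum_cons, hT]; ring
  have hneg := negdef x' c' hsum
  simp only [hc', hx', Fin.sum_univ_succ, Fin.cons_zero, Fin.cons_succ, sub_self, norm_zero,
    mul_zero, zero_sub, sub_zero, norm_neg, zero_add] at hneg
  set S1 : ℝ := ∑ i, c i * ‖x i‖ with hS1
  set D : ℝ := ∑ i, ∑ j, c i * c j * ‖x i - x j‖ with hD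
  have e1 : ∑ j, -T * c j * ‖x j‖ = -(T * S1) := by
    rw [Finset.sum_congr rfl fun j (_ : j ∈ Finset.univ) =>
      (show -T * c j * ‖x j‖ = -(T * (c j * ‖x j‖)) by ring),
      Finset.sum_neg_distrib, ← Finset.mul_sum, ← hS1]
  have e2 : ∑ i, (c i * -T * ‖x i‖ + ∑ j, c i * c j * ‖x i - x j‖) = -(T * S1) + D := by
    rw [Finset.sum_add_distrib, ← hD]
    congr 1
    calc ∑ i, c i * -T * ‖x i‖ = ∑ j, -T * c j * ‖x j‖ :=
          Finset.sum_congr rfl fun i _ => by ring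
      _ = -(T * S1) := e1
  rw [e1, e2] at hneg
  have goalEq : ∑ i, ∑ j, c i * c j * (‖x i‖ + ‖x j‖ - ‖x i - x j‖)
      = S1 * T + T * S1 - D := by
    have per : ∀ i, ∑ j, c i * c j * (‖x i‖ + ‖x j‖ - ‖x i - x j‖)
        = (c i * ‖x i‖) * T + c i * S1 - ∑ j, c i * c j * ‖x i - x j‖ := by
      intro i
      calc ∑ j, c i * c j * (‖x i‖ + ‖x j‖ - ‖x i - x j‖)
          = ∑ j, ((c i * ‖x i‖) * c j + c i * (c j * ‖x j‖) - c i * c j * ‖x i - x j‖) :=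
            Finset.sum_congr rfl fun j _ => by ring
        _ = (∑ j, ((c i * ‖x i‖) * c j + c i * (c j * ‖x j‖)))
              - ∑ j, c i * c j * ‖x i - x j‖ := Finset.sum_sub_distrib _ _
        _ = ((∑ j, (c i * ‖x i‖) * c j) + ∑ j, c i * (c j * ‖x j‖))
              - ∑ j, c i * c j * ‖x i - x j‖ := by rw [Finset.sum_add_distrib]
        _ = (c i * ‖x i‖) * T + c i * S1 - ∑ j, c i * c j * ‖x i - x j‖ := by
            rw [← Finset.mul_sum, ← Finset.mul_sum, ← hT, ← hS1]
    calc ∑ i, ∑ j, c i * c j * (‖x i‖ + ‖x j‖ - ‖x i - x j‖)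
        = ∑ i, ((c i * ‖x i‖) * T + c i * S1 - ∑ j, c i * c j * ‖x i - x j‖) :=
          Finset.sum_congr rfl fun i _ => per i
      _ = (∑ i, ((c i * ‖x i‖) * T + c i * S1)) - D := by rw [Finset.sum_sub_distrib, hD]
      _ = ((∑ i, (c i * ‖x i‖) * T) + ∑ i, c i * S1) - D := by rw [Finset.sum_add_distrib]
      _ = S1 * T + T * S1 - D := by
          rw [← Finset.sum_mul, ← Finset.sum_mul, ← hS1, ← hT]
  simp only
  rw [goalEq]
  linarith

/-- The Laplacian kernel `k(x, y) = exp (−‖x − y‖ / h)` is positive semidefinite on a real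
inner product space. -/
theorem laplacian_kernel_posSemidef {H : Type*} [NormedAddCommGroup H]
    [InnerProductSpace ℝ H] (h : ℝ) (hh : 0 < h) :
    ∀ (n : ℕ) (x : Fin n → H) (c : Fin n → ℝ),
      0 ≤ ∑ i : Fin n, ∑ j : Fin n,
        c i * c j * Real.exp (-‖x i - x j‖ / h) := by
  intro n x c
  have hN := psdk_norm_kernel x
  have hK : PSDk (fun i j => (‖x i‖ + ‖x j‖ - ‖x i - x j‖) / h) := by
    intro e
    have := hN e
    calc (0:ℝ) ≤ (∑ i, ∑ j, e i * e j * (‖x i‖ + ‖x j‖ - ‖x i - x j‖)) / h := by positivity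
      _ = ∑ i, ∑ j, e i * e j * ((‖x i‖ + ‖x j‖ - ‖x i - x j‖) / h) := by
          rw [Finset.sum_div]
          refine Finset.sum_congr rfl fun i _ => ?_
          rw [Finset.sum_div]
          exact Finset.sum_congr rfl fun j _ => by ring
  have hKs : ∀ i j, (‖x i‖ + ‖x j‖ - ‖x i - x j‖) / h
      = (‖x j‖ + ‖x i‖ - ‖x j - x i‖) / h := by
    intro i j
    rw [norm_sub_rev]
    ring
  set d : Fin n → ℝ := fun i => c i * Real.exp (-‖x i‖ / h) with hd
  have key : ∀ i j, c i * c j * Real.exp (-‖x i - x j‖ / h)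
      = d i * d j * Real.exp ((‖x i‖ + ‖x j‖ - ‖x i - x j‖) / h) := by
    intro i j
    have harg : -‖x i - x j‖ / h
        = -‖x i‖ / h + (-‖x j‖ / h + (‖x i‖ + ‖x j‖ - ‖x i - x j‖) / h) := by
      field_simp
      ring
    rw [harg, Real.exp_add, Real.exp_add, hd]
    simp only
    ring
  calc (0:ℝ) ≤ ∑ i, ∑ j, d i * d j * Real.exp ((‖x i‖ + ‖x j‖ - ‖x i - x j‖) / h) :=
        psdk_exp hKs hK d
    _ = ∑ i, ∑ j, c i * c j * Real.exp (-‖x i - x j‖ / h) :=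
        Finset.sum_congr rfl fun i _ => Finset.sum_congr rfl fun j _ => (key i j).symm
end
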